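/- Let a ≥ 0, ε > 0, θ ∈ ℝ with θ ≠ 0, t ≥ 0, and let s : [0,t] → ℂ be continuously differentiable. Then |∫₀ᵗ s(u) e^{iθu/ε} e^{-a(t-u)} du| ≤ (ε/|θ|) [ |s(t)| + |s(0)| e^{-at} + ∫₀ᵗ (|s'(u)| + a|s(u)|) e^{-a(t-u)} du ]. -/

import Mathlib

open Real MeasureTheory intervalIntegral

/-- Integration-by-parts (small divisor) estimate for a fast-oscillating integral against a
continuously differentiable amplitude `s` on `[0, t]` and an exponential damping `e^{-a(t-u)}`. -/
theorem oscillatory_integral_estimate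
    (a ε θ t : ℝ) (ha : 0 ≤ a) (hε : 0 < ε) (hθ : θ ≠ 0) (ht : 0 ≤ t)
    (s s' : ℝ → ℂ)
    (hs : ∀ u ∈ Set.Icc (0 : ℝ) t, HasDerivAt s (s' u) u)
    (hs' : ContinuousOn s' (Set.Icc (0 : ℝ) t)) :
    ‖∫ u in (0 : ℝ)..t,
        s u * Complex.exp (Complex.I * (θ : ℂ) * (u : ℂ) / (ε : ℂ)) *
          ((Real.exp (-a * (t - u)) : ℝ) : ℂ)‖ ≤
      (ε / |θ|) *
        (‖s t‖ + ‖s 0‖ * Real.exp (-a * t) +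
          ∫ u in (0 : ℝ)..t, (‖s' u‖ + a * ‖s u‖) * Real.exp (-a * (t - u))) := by
  have hεc : (ε : ℂ) ≠ 0 := by exact_mod_cast hε.ne'
  have hθc : (θ : ℂ) ≠ 0 := by exact_mod_cast hθ
  have hIcc : Set.uIcc (0 : ℝ) t = Set.Icc 0 t := Set.uIcc_of_le ht
  set c : ℂ := Complex.I * θ / ε with hcdef
  set K : ℂ := (ε : ℂ) / (Complex.I * θ) with hKdef
  have hKc : K * c = 1 := by
    rw [hKdef, hcdef]
    field_simp
  have hKnorm : ‖K‖ = ε / |θ| := by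
    rw [hKdef]
    rw [norm_div, norm_mul, Complex.norm_I, one_mul, Complex.norm_real, Complex.norm_real,
      Real.norm_eq_abs, Real.norm_eq_abs, abs_of_pos hε]
  set g : ℝ → ℂ := fun x => ((Real.exp (-a * (t - x)) : ℝ) : ℂ) with hgdef
  set U : ℝ → ℂ := fun x => s x * g x with hUdef
  set U' : ℝ → ℂ := fun x => s' x * g x + s x * ((a : ℂ) * g x) with hU'def
  set V : ℝ → ℂ := fun x => K * Complex.exp (c * x) with hVdef
  set V' : ℝ → ℂ := fun x => Complex.exp (c * x) with hV'def
  -- derivative of g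
  have hg : ∀ x : ℝ, HasDerivAt g ((a : ℂ) * g x) x := by
    intro x
    have h1 : HasDerivAt (fun x : ℝ => -a * (t - x)) a x := by
      have := ((hasDerivAt_id x).const_sub t).const_mul (-a)
      simpa using this
    have h2 := (h1.exp).ofReal_comp
    simpa [hgdef, mul_comm] using h2
  have hU : ∀ x ∈ Set.uIcc (0 : ℝ) t, HasDerivAt U (U' x) x := by
    intro x hx
    rw [hIcc] at hx
    exact (hs x hx).mul (hg x)
  have hV : ∀ x ∈ Set.uIcc (0 : ℝ) t, HasDerivAt V (V' x) x := by
    intro x hx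
    have h1 : HasDerivAt (fun w : ℂ => K * Complex.exp (c * w)) (K * (c * Complex.exp (c * x))) x := by
      have := ((Complex.hasDerivAt_exp (c * x)).comp (x : ℂ)
        ((hasDerivAt_id (x : ℂ)).const_mul c)).const_mul K
      simpa [mul_comm, mul_assoc, mul_left_comm] using this
    have h2 := h1.comp_ofReal
    have : K * (c * Complex.exp (c * x)) = V' x := by
      rw [hV'def, ← mul_assoc, hKc, one_mul]
    rw [this] at h2
    exact h2
  -- continuity facts
  have hsc : ContinuousOn s (Set.Icc (0 : ℝ) t) := fun x hx =>
    (hs x hx).continuousAt.continuousWithinAt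
  have hgc : Continuous g := by
    continuity
  have hU'int : IntervalIntegrable U' volume 0 t := by
    apply ContinuousOn.intervalIntegrable
    rw [hIcc]
    exact (hs'.mul hgc.continuousOn).add
      (hsc.mul (continuous_const.mul hgc).continuousOn)
  have hV'int : IntervalIntegrable V' volume 0 t := by
    apply Continuous.intervalIntegrable
    exact Complex.continuous_exp.comp (continuous_const.mul Complex.continuous_ofReal)
  -- integration by parts
  have hIBP := intervalIntegral.integral_mul_deriv_eq_deriv_mul hU hV hU'int hV'int
  have hEq : (∫ u in (0 : ℝ)..t,
        s u * Complex.exp (Complex.I * (θ : ℂ) * (u : ℂ) / (ε : ℂ)) *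
          ((Real.exp (-a * (t - u)) : ℝ) : ℂ)) = ∫ x in (0 : ℝ)..t, U x * V' x := by
    apply intervalIntegral.integral_congr
    intro x hx
    rw [hUdef, hV'def]
    simp only [hgdef, hcdef]
    ring_nf
  rw [hEq, hIBP]
  -- norms of exponentials
  have hexpnorm : ∀ x : ℝ, ‖Complex.exp (c * x)‖ = 1 := by
    intro x
    rw [Complex.norm_exp]
    have : (c * x).re = 0 := by
      simp [hcdef, div_mul_eq_mul_div, Complex.div_re]
    rw [this, Real.exp_zero]
  have hVnorm : ∀ x : ℝ, ‖V x‖ = ε / |θ| := by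
    intro x
    rw [hVdef]
    simp only [norm_mul, hexpnorm, mul_one, hKnorm]
  have hgnorm : ∀ x : ℝ, ‖g x‖ = Real.exp (-a * (t - x)) := by
    intro x
    rw [hgdef, Complex.norm_real, Real.norm_eq_abs, abs_of_pos (Real.exp_pos _)]
  -- bound the boundary terms
  have hUt : ‖U t * V t‖ = (ε / |θ|) * ‖s t‖ := by
    rw [norm_mul, hVnorm, hUdef]
    simp only [norm_mul, hgnorm]
    rw [sub_self, mul_zero, Real.exp_zero, mul_one]
    ring
  have hU0 : ‖U 0 * V 0‖ = (ε / |θ|) * (‖s 0‖ * Real.exp (-a * t)) := by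
    rw [norm_mul, hVnorm, hUdef]
    simp only [norm_mul, hgnorm]
    rw [sub_zero]
    ring
  -- bound the remaining integral
  have hbound_int : ‖∫ x in (0 : ℝ)..t, U' x * V x‖ ≤
      (ε / |θ|) * ∫ u in (0 : ℝ)..t, (‖s' u‖ + a * ‖s u‖) * Real.exp (-a * (t - u)) := by
    have hRint : IntervalIntegrable
        (fun u => (ε / |θ|) * ((‖s' u‖ + a * ‖s u‖) * Real.exp (-a * (t - u)))) volume 0 t := by
      apply ContinuousOn.intervalIntegrable
      rw [hIcc]
      apply ContinuousOn.mul continuousOn_const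
      exact ((hs'.norm.add (continuousOn_const.mul hsc.norm)).mul
        (Real.continuous_exp.comp (continuous_const.mul (continuous_const.sub continuous_id))).continuousOn)
    have hptwise : ∀ᵐ x ∂(volume.restrict (Set.uIoc (0:ℝ) t)),
        ‖U' x * V x‖ ≤ (ε / |θ|) * ((‖s' x‖ + a * ‖s x‖) * Real.exp (-a * (t - x))) := by
      apply Filter.Eventually.of_forall
      intro x
      rw [norm_mul, hVnorm]
      rw [mul_comm]
      apply mul_le_mul_of_nonneg_left _ (by positivity)
      calc ‖U' x‖ ≤ ‖s' x * g x‖ + ‖s x * ((a:ℂ) * g x)‖ := norm_add_le _ _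
        _ = (‖s' x‖ + a * ‖s x‖) * Real.exp (-a * (t - x)) := by
            simp only [norm_mul, hgnorm, Complex.norm_real, Real.norm_eq_abs, abs_of_nonneg ha]
            ring
    have := intervalIntegral.norm_integral_le_abs_of_norm_le hptwise hRint
    calc ‖∫ x in (0 : ℝ)..t, U' x * V x‖
        ≤ |∫ x in (0:ℝ)..t, (ε / |θ|) * ((‖s' x‖ + a * ‖s x‖) * Real.exp (-a * (t - x)))| := this
      _ = ∫ x in (0:ℝ)..t, (ε / |θ|) * ((‖s' x‖ + a * ‖s x‖) * Real.exp (-a * (t - x))) := by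
          apply abs_of_nonneg
          apply intervalIntegral.integral_nonneg ht
          intro u _
          positivity
      _ = (ε / |θ|) * ∫ u in (0 : ℝ)..t, (‖s' u‖ + a * ‖s u‖) * Real.exp (-a * (t - u)) := by
          rw [intervalIntegral.integral_const_mul]
  calc ‖U t * V t - U 0 * V 0 - ∫ x in (0:ℝ)..t, U' x * V x‖
      ≤ ‖U t * V t‖ + ‖U 0 * V 0‖ + ‖∫ x in (0:ℝ)..t, U' x * V x‖ := by
        refine (norm_sub_le _ _).trans ?_
        gcongr
        exact norm_sub_le _ _
    _ ≤ (ε / |θ|) * ‖s t‖ + (ε / |θ|) * (‖s 0‖ * Real.exp (-a * t)) +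
        (ε / |θ|) * ∫ u in (0 : ℝ)..t, (‖s' u‖ + a * ‖s u‖) * Real.exp (-a * (t - u)) := by
        rw [hUt, hU0]
        gcongr
    _ = (ε / |θ|) *
        (‖s t‖ + ‖s 0‖ * Real.exp (-a * t) +
          ∫ u in (0 : ℝ)..t, (‖s' u‖ + a * ‖s u‖) * Real.exp (-a * (t - u))) := by ring
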